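/- Let L be a linear subspace of D×D complex matrices such that L^j = End(ℂ^D) for some j ≥ 1 (where L^j denotes the span of all products of j elements of L). If H ∈ L^λ is a nonzero matrix with H² = 0 and rank(H) = ρ satisfying λρ ≤ D(1 + log₂(D/ρ)), then either (1) there exist λ₁ ≥ 1 and a matrix H₁ ∈ L^{λ₁} with H₁² = 0 and rank(H₁) = ρ₁ where 1 ≤ ρ₁ ≤ ρ/2 and λ₁ρ₁ ≤ D(1 + log₂(D/ρ₁)), or (2) there exists Λ ≤ λ + 2D/ρ and a non-nilpotent matrix in L^Λ of rank at most ρ. -/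

import Mathlib

open Matrix Submodule Module

namespace Stmt2Proof

variable {D : ℕ}

lemma rank_pos_of_ne_zero {X : Matrix (Fin D) (Fin D) ℂ} (hX : X ≠ 0) : 1 ≤ X.rank := by
  rw [Nat.one_le_iff_ne_zero]
  intro h0
  apply hX
  have hbot : LinearMap.range X.mulVecLin = ⊥ := by
    have : Module.finrank ℂ (LinearMap.range X.mulVecLin) = 0 := h0
    exact Submodule.finrank_eq_zero.mp this
  have hz : X.mulVecLin = 0 := LinearMap.range_eq_bot.mp hbot
  ext i j
  have h1 : X.mulVecLin (Pi.single j 1) = 0 := by rw [hz]; rfl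
  have h2 : X *ᵥ Pi.single j 1 = Xᵀ j := Matrix.mulVec_single_one X j
  have : Xᵀ j = 0 := by rw [← h2]; exact h1
  have := congrFun this i
  simpa using this

lemma mem_pow_mul {L : Submodule ℂ (Matrix (Fin D) (Fin D) ℂ)} {a b : ℕ}
    {X Y : Matrix (Fin D) (Fin D) ℂ} (hX : X ∈ L ^ a) (hY : Y ∈ L ^ b) :
    X * Y ∈ L ^ (a + b) := by
  rw [pow_add]; exact Submodule.mul_mem_mul hX hY

lemma log_aux (K : ℕ) (hK : 1 ≤ K) :
    2 * (K : ℝ) / ((K : ℝ) + 1) ≤ Real.logb 2 ((K : ℝ) + 1) := by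
  have hKpos : (0:ℝ) < (K:ℝ) + 1 := by positivity
  match K, hK with
  | 1, _ =>
    rw [show ((1:ℕ):ℝ) + 1 = 2 by norm_num]
    rw [Real.logb_self_eq_one (by norm_num)]
    norm_num
  | 2, _ =>
    have h3 : ((2:ℕ):ℝ) + 1 = 3 := by norm_num
    rw [h3]
    have hlog : Real.logb 2 3 = Real.log 3 / Real.log 2 := rfl
    have h2pos : (0:ℝ) < Real.log 2 := Real.log_pos (by norm_num)
    rw [hlog]
    rw [div_le_div_iff₀ (by norm_num) h2pos]
    have : Real.log ((2:ℝ)^(4:ℕ)) ≤ Real.log ((3:ℝ)^(3:ℕ)) :=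
      Real.log_le_log (by norm_num) (by norm_num)
    rw [Real.log_pow, Real.log_pow] at this
    push_cast at this ⊢
    nlinarith
  | (n+3), _ =>
    have h1 : 2 * ((n+3:ℕ) : ℝ) / (((n+3:ℕ) : ℝ) + 1) ≤ 2 := by
      rw [div_le_iff₀ hKpos]
      push_cast
      nlinarith [Nat.cast_nonneg (α := ℝ) n]
    have h2 : (2:ℝ) ≤ Real.logb 2 (((n+3:ℕ):ℝ) + 1) := by
      have h4 : Real.logb 2 (4:ℝ) = 2 := by
        rw [show (4:ℝ) = 2^(2:ℕ) by norm_num, Real.logb_pow]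
        rw [Real.logb_self_eq_one (by norm_num)]
        norm_num
      have := (Real.logb_le_logb (b := 2) (x := (4:ℝ)) (y := ((n+3:ℕ):ℝ)+1)
        (by norm_num) (by norm_num) hKpos).mpr (by push_cast; nlinarith [Nat.cast_nonneg (α := ℝ) n])
      linarith
    linarith


lemma pow_rank_step {W : Type*} [AddCommGroup W] [Module ℂ W] [FiniteDimensional ℂ W]
    (ψ : W →ₗ[ℂ] W) (i : ℕ) :
    finrank ℂ (LinearMap.range (ψ^(i+1)))
      + finrank ℂ ((LinearMap.range (ψ^i)) ⊓ (LinearMap.ker ψ) : Submodule ℂ W)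
      = finrank ℂ (LinearMap.range (ψ^i)) := by
  set p := LinearMap.range (ψ^i) with hp
  have h := LinearMap.finrank_range_add_finrank_ker (ψ ∘ₗ p.subtype)
  have hrange : LinearMap.range (ψ ∘ₗ p.subtype) = LinearMap.range (ψ^(i+1)) := by
    rw [LinearMap.range_comp, Submodule.range_subtype, pow_succ', Module.End.mul_eq_comp,
      LinearMap.range_comp]
  have hker : finrank ℂ (LinearMap.ker (ψ ∘ₗ p.subtype))
      = finrank ℂ (p ⊓ LinearMap.ker ψ : Submodule ℂ W) := by
    rw [LinearMap.ker_comp]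
    have e := Submodule.equivMapOfInjective p.subtype (Submodule.injective_subtype p)
      (Submodule.comap p.subtype (LinearMap.ker ψ))
    rw [e.finrank_eq, Submodule.map_comap_subtype]
  rw [hrange, hker] at h
  exact h

lemma pow_rank_count {W : Type*} [AddCommGroup W] [Module ℂ W] [FiniteDimensional ℂ W]
    (ψ : W →ₗ[ℂ] W) (K : ℕ) (hψ : ψ^(K+1) = 0) :
    (K+1) * finrank ℂ (LinearMap.range (ψ^K)) ≤ finrank ℂ W := by
  set m := finrank ℂ (LinearMap.range (ψ^K)) with hm
  have hle : ∀ i ≤ K, m ≤ finrank ℂ ((LinearMap.range (ψ^i)) ⊓ LinearMap.ker ψ : Submodule ℂ W) := by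
    intro i hi
    apply Submodule.finrank_mono
    apply le_inf
    · have hKi : ψ^K = ψ^i * ψ^(K-i) := by
        rw [← pow_add]
        congr 1
        omega
      rw [hKi, Module.End.mul_eq_comp]
      exact LinearMap.range_comp_le_range _ _
    · rintro x ⟨y, rfl⟩
      simp only [LinearMap.mem_ker]
      have : ψ ((ψ^K) y) = (ψ^(K+1)) y := by rw [pow_succ', Module.End.mul_eq_comp]; rfl
      rw [this, hψ]
      rfl
  have main : ∀ n, n ≤ K+1 → n * m ≤ finrank ℂ (LinearMap.range (ψ^(K+1-n))) := by
    intro n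
    induction n with
    | zero => intro _; simp
    | succ n ih =>
      intro hn
      have h1 := ih (by omega)
      have hKn : K+1-n = (K-n) + 1 := by omega
      rw [hKn] at h1
      have h2 := pow_rank_step ψ (K-n)
      have h3 := hle (K-n) (by omega)
      have : (K+1) - (n+1) = K - n := by omega
      rw [this]
      calc (n+1)*m = n*m + m := by ring
        _ ≤ finrank ℂ (LinearMap.range (ψ^((K-n)+1)))
            + finrank ℂ ((LinearMap.range (ψ^(K-n))) ⊓ LinearMap.ker ψ : Submodule ℂ W) :=
              Nat.add_le_add h1 h3
        _ = finrank ℂ (LinearMap.range (ψ^(K-n))) := h2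
  have hfin := main (K+1) le_rfl
  have h0 : K + 1 - (K + 1) = 0 := Nat.sub_self _
  rw [h0, pow_zero, Module.End.one_eq_id, LinearMap.range_id, finrank_top] at hfin
  exact hfin

lemma map_pow_restrict {V : Type*} [AddCommGroup V] [Module ℂ V]
    (φ : V →ₗ[ℂ] V) (U : Submodule ℂ V) (hU : ∀ x ∈ U, φ x ∈ U) (k : ℕ) :
    Submodule.map (U.subtype) (LinearMap.range ((φ.restrict hU)^k)) = Submodule.map (φ^k) U := by
  induction k with
  | zero =>
    simp only [pow_zero, Module.End.one_eq_id, LinearMap.range_id, Submodule.map_id,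
      Submodule.map_subtype_top]
  | succ k ih =>
    have hcomm : U.subtype ∘ₗ (φ.restrict hU) = φ ∘ₗ U.subtype := by
      ext x
      simp [LinearMap.restrict_apply]
    have h1 : (φ.restrict hU)^(k+1) = (φ.restrict hU) ∘ₗ (φ.restrict hU)^k := by
      rw [pow_succ', Module.End.mul_eq_comp]
    have h2 : φ^(k+1) = φ ∘ₗ φ^k := by rw [pow_succ', Module.End.mul_eq_comp]
    rw [h1, h2, LinearMap.range_comp, ← Submodule.map_comp, hcomm, Submodule.map_comp,
      ih, ← Submodule.map_comp]


lemma hU_stable (H A : Matrix (Fin D) (Fin D) ℂ) :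
    ∀ x ∈ LinearMap.range H.mulVecLin, (H*A).mulVecLin x ∈ LinearMap.range H.mulVecLin := by
  intro x _
  rw [Matrix.mulVecLin_mul]
  exact ⟨A.mulVecLin x, rfl⟩

noncomputable def psi (H A : Matrix (Fin D) (Fin D) ℂ) :
    (LinearMap.range H.mulVecLin) →ₗ[ℂ] (LinearMap.range H.mulVecLin) :=
  ((H*A).mulVecLin).restrict (hU_stable H A)

lemma mat_pow_eq (H A : Matrix (Fin D) (Fin D) ℂ) (k : ℕ) :
    H*(A*H)^k = (H*A)^k * H := by
  induction k with
  | zero => simp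
  | succ k ih =>
    rw [pow_succ, ← mul_assoc, ih, pow_succ]
    rw [mul_assoc ((H*A)^k) H (A*H), mul_assoc ((H*A)^k) (H*A) H, ← mul_assoc H A H]

lemma mulVecLin_pow (X : Matrix (Fin D) (Fin D) ℂ) (k : ℕ) :
    (X^k).mulVecLin = (X.mulVecLin)^k := by
  induction k with
  | zero => rw [pow_zero, pow_zero, Matrix.mulVecLin_one, Module.End.one_eq_id]
  | succ k ih => rw [pow_succ, pow_succ, Matrix.mulVecLin_mul, ih, Module.End.mul_eq_comp]

lemma range_map_eq (H A : Matrix (Fin D) (Fin D) ℂ) (k : ℕ) :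
    Submodule.map (LinearMap.range H.mulVecLin).subtype (LinearMap.range ((psi H A)^k))
      = LinearMap.range ((H*(A*H)^k).mulVecLin) := by
  rw [show (H*(A*H)^k).mulVecLin = (((H*A).mulVecLin)^k) ∘ₗ H.mulVecLin by
        rw [mat_pow_eq, Matrix.mulVecLin_mul, mulVecLin_pow],
      LinearMap.range_comp, ← map_pow_restrict _ _ (hU_stable H A) k]
  rfl

lemma rank_pow_eq (H A : Matrix (Fin D) (Fin D) ℂ) (k : ℕ) :
    (H*(A*H)^k).rank = finrank ℂ (LinearMap.range ((psi H A)^k)) := by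
  show finrank ℂ (LinearMap.range ((H*(A*H)^k).mulVecLin)) = _
  rw [← range_map_eq]
  exact (Submodule.equivMapOfInjective _ (Submodule.injective_subtype _) _).finrank_eq.symm

lemma psi_pow_zero_of (H A : Matrix (Fin D) (Fin D) ℂ) (k : ℕ) (h : H*(A*H)^k = 0) :
    (psi H A)^k = 0 := by
  have h4 := range_map_eq H A k
  rw [h, Matrix.mulVecLin_zero, LinearMap.range_zero] at h4
  have hbot : LinearMap.range ((psi H A)^k) = ⊥ := by
    apply Submodule.map_injective_of_injective
      (Submodule.injective_subtype (LinearMap.range H.mulVecLin))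
    rw [h4, Submodule.map_bot]
  exact LinearMap.range_eq_bot.mp hbot

end Stmt2Proof


set_option maxHeartbeats 3200000 in
set_option synthInstance.maxHeartbeats 400000 in
theorem stmt2 (D : ℕ) (L : Submodule ℂ (Matrix (Fin D) (Fin D) ℂ))
    (hL : ∃ j ≥ 1, L ^ j = ⊤)
    (lam ρ : ℕ) (hlam : 1 ≤ lam) (H : Matrix (Fin D) (Fin D) ℂ)
    (hHL : H ∈ L ^ lam) (hH0 : H ≠ 0) (hH2 : H * H = 0)
    (hρ : H.rank = ρ)
    (hbound : (lam : ℝ) * ρ ≤ D * (1 + Real.logb 2 ((D : ℝ) / ρ))) :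
    (∃ lam₁ ρ₁ : ℕ, 1 ≤ lam₁ ∧ 1 ≤ ρ₁ ∧ (ρ₁ : ℝ) ≤ (ρ : ℝ) / 2 ∧
        (lam₁ : ℝ) * ρ₁ ≤ D * (1 + Real.logb 2 ((D : ℝ) / ρ₁)) ∧
        ∃ H₁ ∈ L ^ lam₁, H₁ * H₁ = 0 ∧ H₁.rank = ρ₁) ∨
    (∃ Lam : ℕ, (Lam : ℝ) ≤ (lam : ℝ) + 2 * D / ρ ∧
        ∃ A ∈ L ^ Lam, ¬ IsNilpotent A ∧ A.rank ≤ ρ) := by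
  classical
  obtain ⟨j, hj1, hjtop⟩ := hL
  have hρ1 : 1 ≤ ρ := hρ ▸ Stmt2Proof.rank_pos_of_ne_zero hH0
  have h2ρ : 2 * ρ ≤ D := by
    have h := Matrix.rank_add_rank_le_card_of_mul_eq_zero hH2
    rw [hρ, Fintype.card_fin] at h
    omega
  have hD1 : 1 ≤ D := by omega
  have hρ0R : (0:ℝ) < ρ := by exact_mod_cast hρ1
  have hD0R : (0:ℝ) < D := by exact_mod_cast hD1
  have h2ρR : 2*(ρ:ℝ) ≤ D := by exact_mod_cast h2ρ
  have hex : ∃ i, 1 ≤ i ∧ ∃ A, A ∈ L^i ∧ H*A*H ≠ 0 := by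
    obtain ⟨p, q, hpq⟩ : ∃ p q, H p q ≠ 0 := by
      by_contra hc
      push_neg at hc
      exact hH0 (by ext p q; simpa using hc p q)
    refine ⟨j, hj1, Matrix.single q p 1, by rw [hjtop]; trivial, ?_⟩
    intro hzero
    have hval : (H * Matrix.single q p 1 * H : Matrix (Fin D) (Fin D) ℂ) p q
        = H p q * H p q := by
      rw [Matrix.mul_apply]
      rw [Finset.sum_eq_single p]
      · rw [Matrix.mul_single_apply_same]
        ring
      · intro k _ hk
        rw [Matrix.mul_single_apply_of_ne _ _ _ _ _ hk, zero_mul]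
      · intro hmem
        exact absurd (Finset.mem_univ p) hmem
    rw [hzero] at hval
    simp at hval
    exact hpq (by simpa using hval)
  set t := Nat.find hex with htdef
  have ht1 : 1 ≤ t := (Nat.find_spec hex).1
  have ht0R : (0:ℝ) < t := by exact_mod_cast ht1
  obtain ⟨A, hAmem, hAne⟩ := (Nat.find_spec hex).2
  have hmin : ∀ i, 1 ≤ i → i < t → ∀ X, X ∈ L^i → H*X*H = 0 := by
    intro i hi1 hilt X hX
    by_contra hne
    exact (Nat.find_min hex hilt) ⟨hi1, X, hX, hne⟩
  by_cases hcase : (t:ℝ) * ρ ≤ 2*D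
  · -- CASE I : t ≤ 2D/ρ
    by_cases hnil : IsNilpotent (A*H)
    · -- nilpotent: build H₁ = H*(A*H)^K
      obtain ⟨n, hn⟩ := hnil
      have hn1 : 1 ≤ n := by
        rcases Nat.eq_zero_or_pos n with h0 | h
        · exfalso
          rw [h0, pow_zero] at hn
          apply hH0
          calc H = H * 1 := (mul_one H).symm
            _ = H * 0 := by rw [hn]
            _ = 0 := mul_zero H
        · exact h
      set P : ℕ → Prop := fun k => H*(A*H)^k ≠ 0 with hPdef
      have hP1 : P 1 := by
        show H*(A*H)^1 ≠ 0
        rw [pow_one, ← mul_assoc]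
        exact hAne
      set K := Nat.findGreatest P n with hKdef
      have hK1 : 1 ≤ K := Nat.le_findGreatest hn1 hP1
      have hKspec : P K := Nat.findGreatest_spec hn1 hP1
      have hKlen : K ≤ n := Nat.findGreatest_le n
      have hKltn : K < n := by
        rcases Nat.lt_or_ge K n with h | h
        · exact h
        · exfalso
          have hKn : K = n := by omega
          rw [hKn] at hKspec
          exact hKspec (by rw [hn, mul_zero])
      have hK1zero : H*(A*H)^(K+1) = 0 := by
        by_contra hne2
        exact (Nat.findGreatest_is_greatest (Nat.lt_succ_self K) (by omega)) hne2
      set ψ := Stmt2Proof.psi H A with hψdef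
      have hψK1 : ψ^(K+1) = 0 := Stmt2Proof.psi_pow_zero_of H A (K+1) hK1zero
      set m := (H*(A*H)^K).rank with hmdef
      have hmψ : m = Module.finrank ℂ (LinearMap.range (ψ^K)) := Stmt2Proof.rank_pow_eq H A K
      have hfinU : Module.finrank ℂ (LinearMap.range H.mulVecLin) = ρ := hρ
      have hcount : (K+1) * m ≤ ρ := by
        rw [hmψ, ← hfinU]
        exact Stmt2Proof.pow_rank_count ψ K hψK1
      have hm1 : 1 ≤ m := Stmt2Proof.rank_pos_of_ne_zero hKspec
      have hm0R : (0:ℝ) < m := by exact_mod_cast hm1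
      have hKmρ : ((K:ℝ)+1)*m ≤ ρ := by exact_mod_cast hcount
      have hmemk : ∀ k, H*(A*H)^k ∈ L^(lam + k*(t+lam)) := by
        intro k
        induction k with
        | zero => simpa using hHL
        | succ k ih =>
          have hAH : A*H ∈ L^(t+lam) := Stmt2Proof.mem_pow_mul hAmem hHL
          have hmul := Stmt2Proof.mem_pow_mul ih hAH
          have hexp : lam + k*(t+lam) + (t+lam) = lam + (k+1)*(t+lam) := by ring
          rw [hexp] at hmul
          have hmat : H*(A*H)^k * (A*H) = H*(A*H)^(k+1) := by
            rw [pow_succ, mul_assoc]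
          rwa [hmat] at hmul
      have hsq : (H*(A*H)^K) * (H*(A*H)^K) = 0 := by
        obtain ⟨K', hKK'⟩ : ∃ K', K = K'+1 := ⟨K-1, by omega⟩
        rw [hKK']
        have h5 : (A*H)*H = 0 := by rw [mul_assoc, hH2, mul_zero]
        have hzero : (A*H)^(K'+1) * H = 0 := by
          rw [pow_succ, mul_assoc, h5, mul_zero]
        calc (H*(A*H)^(K'+1)) * (H*(A*H)^(K'+1))
            = H*(((A*H)^(K'+1) * H)*(A*H)^(K'+1)) := by noncomm_ring
          _ = 0 := by rw [hzero, zero_mul, mul_zero]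
      have h2m : (m:ℝ) ≤ (ρ:ℝ)/2 := by
        have h2K : 2*m ≤ (K+1)*m := Nat.mul_le_mul_right m (by omega)
        have hmρ : 2*m ≤ ρ := le_trans h2K hcount
        have hcast : 2*(m:ℝ) ≤ ρ := by exact_mod_cast hmρ
        linarith
      have hKm : ((K:ℝ)+1) ≤ (ρ:ℝ)/m := by
        rw [le_div_iff₀ hm0R]
        linarith
      have hmle : (m:ℝ) ≤ (ρ:ℝ)/((K:ℝ)+1) := by
        rw [le_div_iff₀ (by positivity)]
        linarith [hKmρ]
      have htle : (t:ℝ) ≤ 2*(D:ℝ)/ρ := by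
        rw [le_div_iff₀ hρ0R]
        linarith
      have h1 : ((K:ℝ)+1)*((lam:ℝ)*m) ≤ (D:ℝ)*(1 + Real.logb 2 ((D:ℝ)/ρ)) := by
        have he : ((K:ℝ)+1)*((lam:ℝ)*m) = (lam:ℝ)*(((K:ℝ)+1)*m) := by ring
        rw [he]
        calc (lam:ℝ)*(((K:ℝ)+1)*m) ≤ (lam:ℝ)*ρ := by
              apply mul_le_mul_of_nonneg_left hKmρ (by positivity)
          _ ≤ (D:ℝ)*(1 + Real.logb 2 ((D:ℝ)/ρ)) := hbound
      have h2 : (K:ℝ)*((t:ℝ)*m) ≤ (D:ℝ)*Real.logb 2 ((ρ:ℝ)/m) := by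
        have e1 : (t:ℝ)*m ≤ (2*(D:ℝ)/ρ)*((ρ:ℝ)/((K:ℝ)+1)) := by
          apply mul_le_mul htle hmle (by positivity) (by positivity)
        have e2 : (2*(D:ℝ)/ρ)*((ρ:ℝ)/((K:ℝ)+1)) = 2*(D:ℝ)/((K:ℝ)+1) := by
          field_simp
        rw [e2] at e1
        have e3 : (K:ℝ)*((t:ℝ)*m) ≤ (K:ℝ)*(2*(D:ℝ)/((K:ℝ)+1)) :=
          mul_le_mul_of_nonneg_left e1 (by positivity)
        have e4 : (K:ℝ)*(2*(D:ℝ)/((K:ℝ)+1)) = (D:ℝ)*(2*(K:ℝ)/((K:ℝ)+1)) := by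
          ring
        have e5 : (D:ℝ)*(2*(K:ℝ)/((K:ℝ)+1)) ≤ (D:ℝ)*Real.logb 2 ((K:ℝ)+1) :=
          mul_le_mul_of_nonneg_left (Stmt2Proof.log_aux K hK1) (by positivity)
        have e6 : Real.logb 2 ((K:ℝ)+1) ≤ Real.logb 2 ((ρ:ℝ)/m) :=
          (Real.logb_le_logb one_lt_two (by positivity) (by positivity)).mpr hKm
        calc (K:ℝ)*((t:ℝ)*m) ≤ (K:ℝ)*(2*(D:ℝ)/((K:ℝ)+1)) := e3
          _ = (D:ℝ)*(2*(K:ℝ)/((K:ℝ)+1)) := e4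
          _ ≤ (D:ℝ)*Real.logb 2 ((K:ℝ)+1) := e5
          _ ≤ (D:ℝ)*Real.logb 2 ((ρ:ℝ)/m) :=
              mul_le_mul_of_nonneg_left e6 (by positivity)
      have hsplitlog : (D:ℝ)*(1 + Real.logb 2 ((D:ℝ)/m))
          = (D:ℝ)*(1 + Real.logb 2 ((D:ℝ)/ρ)) + (D:ℝ)*Real.logb 2 ((ρ:ℝ)/m) := by
        have hmul : ((D:ℝ)/ρ)*((ρ:ℝ)/m) = (D:ℝ)/m := by
          field_simp
        have hlb : Real.logb 2 ((D:ℝ)/m)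
            = Real.logb 2 ((D:ℝ)/ρ) + Real.logb 2 ((ρ:ℝ)/m) := by
          rw [← hmul, Real.logb_mul (by positivity) (by positivity)]
        rw [hlb]
        ring
      have key : ((lam + K*(t+lam) : ℕ):ℝ) * m ≤ (D:ℝ)*(1 + Real.logb 2 ((D:ℝ)/m)) := by
        have hcast : ((lam + K*(t+lam) : ℕ):ℝ) * m
            = ((K:ℝ)+1)*((lam:ℝ)*m) + (K:ℝ)*((t:ℝ)*m) := by
          push_cast
          ring
        rw [hcast, hsplitlog]
        exact add_le_add h1 h2
      left
      exact ⟨lam + K*(t+lam), m, by omega, hm1, h2m, key, H*(A*H)^K, hmemk K, hsq, rfl⟩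
    · -- non-nilpotent : disjunct 2
      right
      refine ⟨t + lam, ?_, A*H, Stmt2Proof.mem_pow_mul hAmem hHL, hnil, ?_⟩
      · have htle : (t:ℝ) ≤ 2*(D:ℝ)/ρ := by
          rw [le_div_iff₀ hρ0R]
          linarith
        push_cast
        linarith
      · calc (A*H).rank ≤ H.rank := Matrix.rank_mul_le_right A H
          _ = ρ := hρ
  · -- CASE II : t > 2D/ρ
    push_neg at hcase
    have h2Dℕ : 2*D < t*ρ := by exact_mod_cast hcase
    have ht2 : 2 ≤ t := by
      by_contra hc
      push_neg at hc
      have htle1 : (t:ℝ) ≤ 1 := by exact_mod_cast Nat.lt_succ_iff.mp hc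
      nlinarith
    set gen : ℕ → Submodule ℂ (Fin D → ℂ) := fun i =>
      ⨆ (B : Matrix (Fin D) (Fin D) ℂ) (_ : B ∈ L^i),
        LinearMap.range (((H*B)ᵀ).mulVecLin) with hgendef
    set S : ℕ → Submodule ℂ (Fin D → ℂ) := fun a => ⨆ (i : ℕ) (_ : i ≤ a), gen i with hSdef
    have hrangele : ∀ i a, i ≤ a → ∀ B, B ∈ L^i →
        LinearMap.range (((H*B)ᵀ).mulVecLin) ≤ S a := by
      intro i a hi B hB
      have h1 : LinearMap.range (((H*B)ᵀ).mulVecLin) ≤ gen i :=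
        le_iSup_of_le B (le_iSup_of_le hB le_rfl)
      exact le_trans h1 (le_iSup_of_le i (le_iSup_of_le hi le_rfl))
    have hSle : ∀ a (T : Submodule ℂ (Fin D → ℂ)),
        (∀ i, i ≤ a → ∀ B, B ∈ L^i → LinearMap.range (((H*B)ᵀ).mulVecLin) ≤ T) → S a ≤ T := by
      intro a T h
      exact iSup_le fun i => iSup_le fun hi => iSup_le fun B => iSup_le fun hB => h i hi B hB
    have hSmono : ∀ a b : ℕ, a ≤ b → S a ≤ S b := by
      intro a b hab
      exact hSle a (S b) (fun i hi B hB => hrangele i b (le_trans hi hab) B hB)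
    have hS0 : ρ ≤ Module.finrank ℂ (S 0) := by
      have h1mem : (1 : Matrix (Fin D) (Fin D) ℂ) ∈ L^0 := by
        rw [pow_zero, Submodule.one_eq_span]
        exact Submodule.mem_span_singleton_self 1
      have h2 := hrangele 0 0 le_rfl 1 h1mem
      rw [mul_one] at h2
      have h3 : Module.finrank ℂ (LinearMap.range ((Hᵀ).mulVecLin)) = ρ := by
        have hh : (Hᵀ).rank = ρ := by rw [Matrix.rank_transpose, hρ]
        exact hh
      rw [← h3]
      exact Submodule.finrank_mono h2
    have hstep : ∀ a, 1 ≤ a → a < t → ∀ C C', C ∈ L^a → C' ∈ L^(t-a) →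
        Module.finrank ℂ (S (a-1)) + (H*(C*C')*H).rank ≤ Module.finrank ℂ (S a) := by
      intro a ha1 halt C C' hC hC'
      set θ : (S a) →ₗ[ℂ] (Fin D → ℂ) := (((C'*H)ᵀ).mulVecLin) ∘ₗ (S a).subtype with hθdef
      have hrn := LinearMap.finrank_range_add_finrank_ker θ
      have hSker : S (a-1) ≤ LinearMap.ker (((C'*H)ᵀ).mulVecLin) := by
        apply hSle
        intro i hi B hB
        rintro y ⟨v, rfl⟩
        simp only [LinearMap.mem_ker]
        show ((C'*H)ᵀ) *ᵥ (((H*B)ᵀ) *ᵥ v) = 0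
        rw [Matrix.mulVec_mulVec, ← Matrix.transpose_mul]
        have hzero : (H*B)*(C'*H) = 0 := by
          have he : (H*B)*(C'*H) = H*(B*C')*H := by noncomm_ring
          rw [he]
          exact hmin (i + (t-a)) (by omega) (by omega) (B*C')
            (Stmt2Proof.mem_pow_mul hB hC')
        rw [hzero]
        simp
      have hker : Submodule.comap (S a).subtype (S (a-1)) ≤ LinearMap.ker θ := by
        intro x hx
        simp only [LinearMap.mem_ker, hθdef, LinearMap.comp_apply]
        exact hSker hx
      have hcomap : Module.finrank ℂ (Submodule.comap (S a).subtype (S (a-1)))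
          = Module.finrank ℂ (S (a-1)) :=
        (Submodule.comapSubtypeEquivOfLe (hSmono (a-1) a (by omega))).finrank_eq
      have hkerge : Module.finrank ℂ (S (a-1)) ≤ Module.finrank ℂ (LinearMap.ker θ) := by
        rw [← hcomap]
        exact Submodule.finrank_mono hker
      have hrange : LinearMap.range (((H*(C*C')*H)ᵀ).mulVecLin) ≤ LinearMap.range θ := by
        rintro y ⟨v, rfl⟩
        have hfact : (H*(C*C'))*H = (H*C)*(C'*H) := by noncomm_ring
        refine ⟨⟨((H*C)ᵀ).mulVecLin v, hrangele a a le_rfl C hC ⟨v, rfl⟩⟩, ?_⟩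
        show ((C'*H)ᵀ) *ᵥ (((H*C)ᵀ) *ᵥ v) = ((H*(C*C')*H)ᵀ) *ᵥ v
        rw [Matrix.mulVec_mulVec, ← Matrix.transpose_mul, ← hfact]
      have hrankge : (H*(C*C')*H).rank ≤ Module.finrank ℂ (LinearMap.range θ) := by
        calc (H*(C*C')*H).rank = ((H*(C*C')*H)ᵀ).rank := (Matrix.rank_transpose _).symm
          _ = Module.finrank ℂ (LinearMap.range (((H*(C*C')*H)ᵀ).mulVecLin)) := rfl
          _ ≤ Module.finrank ℂ (LinearMap.range θ) := Submodule.finrank_mono hrange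
      omega
    have hsplit : ∀ a, 1 ≤ a → a < t →
        ∃ C, C ∈ L^a ∧ ∃ C', C' ∈ L^(t-a) ∧ H*(C*C')*H ≠ 0 := by
      intro a ha1 halt
      by_contra hc
      push_neg at hc
      have hLt : L^t ≤ LinearMap.ker ((LinearMap.mulRight ℂ H) ∘ₗ (LinearMap.mulLeft ℂ H)) := by
        rw [show t = a + (t-a) by omega, pow_add]
        apply Submodule.mul_le.mpr
        intro C hC C' hC'
        simp only [LinearMap.mem_ker, LinearMap.comp_apply, LinearMap.mulLeft_apply,
          LinearMap.mulRight_apply]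
        exact hc C hC C' hC'
      have hker := hLt hAmem
      simp only [LinearMap.mem_ker, LinearMap.comp_apply, LinearMap.mulLeft_apply,
        LinearMap.mulRight_apply] at hker
      exact hAne hker
    by_cases hgood : ∃ a, 1 ≤ a ∧ a < t ∧ ∃ C, C ∈ L^a ∧ ∃ C', C' ∈ L^(t-a) ∧
        H*(C*C')*H ≠ 0 ∧ ((H*(C*C')*H).rank : ℝ) ≤ (ρ:ℝ)/2 ∧
        ((lam + t + lam : ℕ):ℝ) * (H*(C*C')*H).rank
          ≤ (D:ℝ) * (1 + Real.logb 2 ((D:ℝ)/((H*(C*C')*H).rank)))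
    · obtain ⟨a, ha1, halt, C, hC, C', hC', hne, hhalf, hbud⟩ := hgood
      left
      have hCC' : C*C' ∈ L^t := by
        have hmm := Stmt2Proof.mem_pow_mul hC hC'
        rwa [show a + (t-a) = t by omega] at hmm
      have hmem : H*(C*C')*H ∈ L^(lam + t + lam) :=
        Stmt2Proof.mem_pow_mul (Stmt2Proof.mem_pow_mul hHL hCC') hHL
      have hsq : (H*(C*C')*H) * (H*(C*C')*H) = 0 := by
        calc (H*(C*C')*H) * (H*(C*C')*H)
            = (H*(C*C'))*((H*H)*((C*C')*H)) := by noncomm_ring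
          _ = 0 := by rw [hH2, zero_mul, mul_zero]
      exact ⟨lam + t + lam, (H*(C*C')*H).rank, by omega,
        Stmt2Proof.rank_pos_of_ne_zero hne, hhalf, hbud, H*(C*C')*H, hmem, hsq, rfl⟩
    · exfalso
      set c1 : ℝ := 1 + Real.logb 2 ((D:ℝ)/ρ) with hc1def
      have hc1ge : (2:ℝ) ≤ c1 := by
        have hl1 : Real.logb 2 (2:ℝ) ≤ Real.logb 2 ((D:ℝ)/ρ) := by
          rw [Real.logb_le_logb one_lt_two (by norm_num) (by positivity)]
          rw [le_div_iff₀ hρ0R]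
          linarith
        rw [Real.logb_self_eq_one one_lt_two] at hl1
        rw [hc1def]
        linarith
      set q : ℕ := D/t + 1 with hqdef
      have hrankq : ∀ a, 1 ≤ a → a < t → ∀ C, C ∈ L^a → ∀ C', C' ∈ L^(t-a) →
          H*(C*C')*H ≠ 0 → q ≤ (H*(C*C')*H).rank := by
        intro a ha1 halt C hC C' hC' hne
        by_contra hlt
        push_neg at hlt
        have hrleN : (H*(C*C')*H).rank ≤ D/t := by omega
        have hrle : ((H*(C*C')*H).rank : ℝ) ≤ (D:ℝ)/t := by
          calc ((H*(C*C')*H).rank : ℝ) ≤ ((D/t : ℕ):ℝ) := by exact_mod_cast hrleN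
            _ ≤ (D:ℝ)/t := Nat.cast_div_le
        have hr1 : 1 ≤ (H*(C*C')*H).rank := Stmt2Proof.rank_pos_of_ne_zero hne
        have hr0R : (0:ℝ) < ((H*(C*C')*H).rank : ℝ) := by exact_mod_cast hr1
        have hhalf : ((H*(C*C')*H).rank : ℝ) ≤ (ρ:ℝ)/2 := by
          have hDt : (D:ℝ)/t ≤ (ρ:ℝ)/2 := by
            rw [div_le_div_iff₀ ht0R (by norm_num : (0:ℝ) < 2)]
            nlinarith
          linarith
        apply hgood
        refine ⟨a, ha1, halt, C, hC, C', hC', hne, hhalf, ?_⟩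
        have h2lam : 2*(lam:ℝ) ≤ (t:ℝ)*c1 := by
          have hA1 : 2*((lam:ℝ)*ρ) ≤ 2*((D:ℝ)*c1) := by
            linarith [hbound]
          have hB1 : 2*((D:ℝ)*c1) ≤ ((t:ℝ)*ρ)*c1 := by
            have hmul := mul_le_mul_of_nonneg_right (le_of_lt hcase)
              (by linarith : (0:ℝ) ≤ c1)
            linarith [hmul]
          have hC1 : (2*(lam:ℝ))*ρ ≤ ((t:ℝ)*c1)*ρ := by
            nlinarith [hA1, hB1]
          exact (mul_le_mul_iff_of_pos_right hρ0R).mp hC1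
        have hstep1 : ((lam + t + lam : ℕ):ℝ)*((H*(C*C')*H).rank : ℝ)
            ≤ ((t:ℝ)*(c1+1))*((H*(C*C')*H).rank : ℝ) := by
          apply mul_le_mul_of_nonneg_right _ (by positivity)
          push_cast
          nlinarith [h2lam]
        have hstep2 : ((t:ℝ)*(c1+1))*((H*(C*C')*H).rank : ℝ)
            ≤ ((t:ℝ)*(c1+1))*((D:ℝ)/t) := by
          apply mul_le_mul_of_nonneg_left hrle (by nlinarith)
        have hstep3 : ((t:ℝ)*(c1+1))*((D:ℝ)/t) = (D:ℝ)*(c1+1) := by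
          field_simp
        have hstep4 : (D:ℝ)*(c1+1) ≤ (D:ℝ)*(1 + Real.logb 2 ((D:ℝ)/((H*(C*C')*H).rank))) := by
          apply mul_le_mul_of_nonneg_left _ (by positivity)
          have hd2 : 2*((D:ℝ)/ρ) ≤ (D:ℝ)/((H*(C*C')*H).rank : ℝ) := by
            rw [show 2*((D:ℝ)/ρ) = (2*(D:ℝ))/ρ by ring, div_le_div_iff₀ hρ0R hr0R]
            nlinarith [mul_le_mul_of_nonneg_left hhalf (by positivity : (0:ℝ) ≤ 2*(D:ℝ))]
          have hl1 : Real.logb 2 (2*((D:ℝ)/ρ)) = 1 + Real.logb 2 ((D:ℝ)/ρ) := by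
            rw [Real.logb_mul (by norm_num) (by positivity), Real.logb_self_eq_one one_lt_two]
          have hl2 : Real.logb 2 (2*((D:ℝ)/ρ)) ≤ Real.logb 2 ((D:ℝ)/((H*(C*C')*H).rank : ℝ)) :=
            (Real.logb_le_logb one_lt_two (by positivity) (by positivity)).mpr hd2
          rw [hl1] at hl2
          rw [hc1def]
          linarith
        calc ((lam + t + lam : ℕ):ℝ)*((H*(C*C')*H).rank : ℝ)
            ≤ ((t:ℝ)*(c1+1))*((H*(C*C')*H).rank : ℝ) := hstep1
          _ ≤ ((t:ℝ)*(c1+1))*((D:ℝ)/t) := hstep2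
          _ = (D:ℝ)*(c1+1) := hstep3
          _ ≤ (D:ℝ)*(1 + Real.logb 2 ((D:ℝ)/((H*(C*C')*H).rank))) := hstep4
      have hchain : ∀ a, a < t → ρ + a*q ≤ Module.finrank ℂ (S a) := by
        intro a
        induction a with
        | zero => intro _; simpa using hS0
        | succ a ih =>
          intro h
          obtain ⟨C, hC, C', hC', hne⟩ := hsplit (a+1) (by omega) h
          have h1 := hstep (a+1) (by omega) h C C' hC hC'
          have h2 := hrankq (a+1) (by omega) h C hC C' hC' hne
          have h3 := ih (by omega)
          calc ρ + (a+1)*q = (ρ + a*q) + q := by ring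
            _ ≤ Module.finrank ℂ (S a) + (H*(C*C')*H).rank := Nat.add_le_add h3 h2
            _ ≤ Module.finrank ℂ (S (a+1)) := h1
      have hfinal := hchain (t-1) (by omega)
      have hleD : Module.finrank ℂ (S (t-1)) ≤ D := by
        have h1 := Submodule.finrank_le (S (t-1))
        rwa [Module.finrank_fin_fun] at h1
      have hqt : D < q*t := by
        have hq1 := (Nat.div_lt_iff_lt_mul (show 0 < t by omega)).mp (Nat.lt_succ_self (D/t))
        calc D < (D/t + 1)*t := hq1
          _ = q*t := by rw [hqdef]
      have hρq : q ≤ ρ := by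
        have hDρt : D < ρ*t := by
          calc D ≤ 2*D := by omega
            _ < t*ρ := h2Dℕ
            _ = ρ*t := by ring
        have hdd := (Nat.div_lt_iff_lt_mul (show 0 < t by omega)).mpr hDρt
        omega
      have hqt' : q*t = q*(t-1) + q := by
        have ht' : t - 1 + 1 = t := by omega
        calc q*t = q*((t-1)+1) := by rw [ht']
          _ = q*(t-1)+q := by ring
      have hcontr : D < D := by
        calc D < q*t := hqt
          _ = q*(t-1) + q := hqt'
          _ = (t-1)*q + q := by ring
          _ ≤ (t-1)*q + ρ := Nat.add_le_add_left hρq _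
          _ = ρ + (t-1)*q := by ring
          _ ≤ Module.finrank ℂ (S (t-1)) := hfinal
          _ ≤ D := hleD
      exact lt_irrefl D hcontr
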